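/- Let A = (Q, Σ, δ) be a weakly acyclic automaton with n states and let S ⊆ Q be reachable, i.e., S = {δ(q, w) : q ∈ Q} for some word w ∈ Σ*. Then there exists a word w' of length at most n(n − 1)/2 with {δ(q, w') : q ∈ Q} = S. -/

import Mathlib

/-- The extension of the transition function to words. -/
def deltaStar {Q A : Type*} (δ : Q → A → Q) (q : Q) (w : List A) : Q := w.foldl δ q

/-- A simple cycle: pairwise distinct states `q 0, …, q (k-1)` together with letters
mapping each state of the cycle to the next one (cyclically). -/
def IsSimpleCycle {Q A : Type*} (δ : Q → A → Q) (k : ℕ) (q : Fin k → Q) : Prop :=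
  0 < k ∧ Function.Injective q ∧
    ∃ x : Fin k → A, ∀ i : Fin k, δ (q i) (x i) = q ⟨(i.val + 1) % k, Nat.mod_lt _ i.pos⟩

/-- An automaton is weakly acyclic if all its simple cycles are self-loops. -/
def WeaklyAcyclic {Q A : Type*} (δ : Q → A → Q) : Prop :=
  ∀ (k : ℕ) (q : Fin k → Q), IsSimpleCycle δ k q → k = 1

/-- A sink state is fixed by every letter. -/
def IsSink {Q A : Type*} (δ : Q → A → Q) (q : Q) : Prop := ∀ x : A, δ q x = q

/-- The word `w` synchronizes the set `S` of states. -/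
def SyncsSet {Q A : Type*} (δ : Q → A → Q) (S : Finset Q) (w : List A) : Prop :=
  ∃ q : Q, ∀ s ∈ S, deltaStar δ s w = q

/-- A set of states is synchronizing if some word synchronizes it. -/
def IsSyncSet {Q A : Type*} (δ : Q → A → Q) (S : Finset Q) : Prop :=
  ∃ w : List A, SyncsSet δ S w

/-- The rank of a word with respect to an automaton: the size of the image of the
state set under the word. -/
def wordRank {Q A : Type*} [Fintype Q] [DecidableEq Q] (δ : Q → A → Q) (w : List A) : ℕ :=
  (Finset.univ.image fun q => deltaStar δ q w).card

/-- The rank of an automaton: the minimum rank of a word with respect to it. -/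
noncomputable def autRank {Q A : Type*} [Fintype Q] [DecidableEq Q] (δ : Q → A → Q) : ℕ :=
  sInf {r | ∃ w : List A, wordRank δ w = r}

/-- The rank of a word with respect to a subset of states. -/
def subsetWordRank {Q A : Type*} [DecidableEq Q] (δ : Q → A → Q) (S : Finset Q)
    (w : List A) : ℕ :=
  (S.image fun q => deltaStar δ q w).card

/-- The rank of a subset of states: the minimum rank of a word with respect to it. -/
noncomputable def subsetRank {Q A : Type*} [DecidableEq Q] (δ : Q → A → Q) (S : Finset Q) : ℕ :=
  sInf {r | ∃ w : List A, subsetWordRank δ S w = r}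

/-- `w^j`: the word obtained by `j` concatenations of `w`. -/
def wordPow {A : Type*} (w : List A) (j : ℕ) : List A := (List.replicate j w).flatten

namespace Stmt19Aux

variable {Q A : Type*} (δ : Q → A → Q)

lemma deltaStar_append (q : Q) (u v : List A) :
    deltaStar δ q (u ++ v) = deltaStar δ (deltaStar δ q u) v :=
  List.foldl_append ..

lemma walk_const (hwa : WeaklyAcyclic δ) :
    ∀ m : ℕ, ∀ s : ℕ → Q, (∀ i < m, ∃ x, δ (s i) x = s (i + 1)) → s m = s 0 →
      ∀ a ≤ m, s a = s 0 := by
  intro m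
  induction m using Nat.strong_induction_on with
  | _ m IH =>
    intro s hstep hclose a ha
    rcases Nat.eq_zero_or_pos m with hm | hm
    · have : a = 0 := by omega
      rw [this]
    by_cases hdup : ∃ i j, i < j ∧ j < m ∧ s i = s j
    · obtain ⟨i, j, hij, hjm, hsij⟩ := hdup
      -- inner cycle
      have hinner : ∀ r ≤ j - i, s (i + r) = s i := by
        have h1 := IH (j - i) (by omega) (fun r => s (i + r)) ?_ ?_
        · intro r hr
          have := h1 r hr
          simpa using this
        · intro r hr
          exact hstep (i + r) (by omega)
        · have : i + (j - i) = j := by omega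
          rw [this, ← hsij]
          simp
      -- outer cycle
      set m' := m - (j - i) with hm'
      have hup : ∀ b ≤ m', (if b ≤ i then s b else s (b + (j - i))) = s 0 := by
        have h1 := IH m' (by omega) (fun r => if r ≤ i then s r else s (r + (j - i))) ?_ ?_
        · intro b hb
          have h2 := h1 b hb
          rwa [if_pos (Nat.zero_le i)] at h2
        · intro r hr
          rcases Nat.lt_or_ge r i with h1 | h1
          · rw [if_pos (by omega), if_pos (by omega)]
            exact hstep r (by omega)
          rcases Nat.eq_or_lt_of_le h1 with h2 | h2
          · rw [if_pos (by omega), if_neg (by omega)]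
            obtain ⟨x, hx⟩ := hstep j (by omega)
            refine ⟨x, ?_⟩
            rw [← h2, hsij, hx]
            congr 1
            omega
          · rw [if_neg (by omega), if_neg (by omega)]
            have : r + 1 + (j - i) = r + (j - i) + 1 := by omega
            rw [this]
            exact hstep (r + (j - i)) (by omega)
        · rw [if_neg (by omega), if_pos (by omega)]
          have : m' + (j - i) = m := by omega
          rw [this, hclose]
      -- conclude
      rcases Nat.lt_or_ge i a with h1 | h1
      · rcases Nat.lt_or_ge j a with h2 | h2
        · -- j < a ≤ m : use outer at b = a - (j - i)
          have hb : a - (j - i) ≤ m' := by omega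
          have := hup (a - (j - i)) hb
          rw [if_neg (by omega)] at this
          have he : a - (j - i) + (j - i) = a := by omega
          rw [he] at this
          exact this
        · -- i < a ≤ j : inner gives s a = s i, then outer at i
          have h3 := hinner (a - i) (by omega)
          have he : i + (a - i) = a := by omega
          rw [he] at h3
          have h4 := hup i (by omega)
          rw [if_pos (le_refl i)] at h4
          rw [h3, h4]
      · -- a ≤ i : outer at a
        have := hup a (by omega)
        rw [if_pos h1] at this
        exact this
    · -- no duplicates: a genuine simple cycle
      push_neg at hdup
      have hinj : Function.Injective (fun i : Fin m => s i.val) := by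
        intro i j hsij
        by_contra hne
        have hne' : i.val ≠ j.val := fun h => hne (Fin.ext h)
        rcases Nat.lt_or_ge i.val j.val with h1 | h1
        · exact hdup i.val j.val h1 j.isLt hsij
        · exact hdup j.val i.val (by omega) i.isLt hsij.symm
      have hx : ∀ i : Fin m, ∃ x, δ (s i.val) x = s ((i.val + 1) % m) := by
        intro i
        rcases Nat.lt_or_ge (i.val + 1) m with h1 | h1
        · rw [Nat.mod_eq_of_lt h1]
          exact hstep i.val i.isLt
        · have h2 : i.val + 1 = m := by omega
          have h3 : (i.val + 1) % m = 0 := by rw [h2]; exact Nat.mod_self m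
          rw [h3]
          obtain ⟨x, hx⟩ := hstep i.val i.isLt
          exact ⟨x, by rw [hx, h2, hclose]⟩
      choose x hxs using hx
      have hcyc : IsSimpleCycle δ m (fun i : Fin m => s i.val) :=
        ⟨hm, hinj, x, fun i => hxs i⟩
      have hm1 : m = 1 := hwa m _ hcyc
      have : a = 0 ∨ a = 1 := by omega
      rcases this with h | h
      · rw [h]
      · rw [h, ← hm1, hclose]

lemma deltaStar_take_succ :
    ∀ (l : List A) (q : Q) (i : ℕ) (h : i < l.length),
      deltaStar δ q (l.take (i + 1)) = δ (deltaStar δ q (l.take i)) (l.get ⟨i, h⟩) := by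
  intro l
  induction l with
  | nil => intro q i h; simp at h
  | cons a l ih =>
    intro q i h
    cases i with
    | zero => simp [deltaStar]
    | succ i =>
      simp only [List.take_succ_cons, List.get_cons_succ]
      have hc : ∀ (p : Q) (t : List A), deltaStar δ p (a :: t) = deltaStar δ (δ p a) t :=
        fun p t => rfl
      rw [hc, hc]
      exact ih (δ q a) i (by simpa using h)

/-- Reachability relation. -/
def Reach : Q → Q → Prop := fun q p => ∃ w : List A, deltaStar δ q w = p

lemma reach_refl (q : Q) : Reach δ q q := ⟨[], rfl⟩

lemma reach_trans {q p r : Q} (h1 : Reach δ q p) (h2 : Reach δ p r) : Reach δ q r := by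
  obtain ⟨w, hw⟩ := h1
  obtain ⟨v, hv⟩ := h2
  exact ⟨w ++ v, by rw [deltaStar_append, hw, hv]⟩

lemma reach_antisymm (hwa : WeaklyAcyclic δ) {q p : Q}
    (h1 : Reach δ q p) (h2 : Reach δ p q) : q = p := by
  obtain ⟨w, hw⟩ := h1
  obtain ⟨v, hv⟩ := h2
  set u := w ++ v with hu
  set s : ℕ → Q := fun i => deltaStar δ q (u.take i) with hs
  have hstep : ∀ i < u.length, ∃ x, δ (s i) x = s (i + 1) := by
    intro i hi
    exact ⟨u.get ⟨i, hi⟩, (deltaStar_take_succ δ u q i hi).symm⟩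
  have hs0 : s 0 = q := rfl
  have hclose : s u.length = s 0 := by
    rw [hs0]
    show deltaStar δ q (u.take u.length) = q
    rw [List.take_length, hu, deltaStar_append, hw, hv]
  have hwp : s w.length = p := by
    show deltaStar δ q (u.take w.length) = p
    rw [hu, List.take_left, hw]
  have := walk_const δ hwa u.length s hstep hclose w.length (by simp [hu])
  rw [hwp, hs0] at this
  exact this.symm

/-- The shortening lemma via the potential function. -/
lemma shorten [Fintype Q] [DecidableEq Q] (h : Q → ℕ)
    (hmono : ∀ (q : Q) (x : A), h q ≤ h (δ q x))
    (hstrict : ∀ (q : Q) (x : A), δ q x ≠ q → h q < h (δ q x)) (w : List A) :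
    ∃ w' : List A,
      Finset.univ.image (fun q => deltaStar δ q w') =
        Finset.univ.image (fun q => deltaStar δ q w) ∧
      w'.length + ∑ q : Q, h q ≤ ∑ q : Q, h (deltaStar δ q w) := by
  induction w using List.reverseRecOn with
  | nil => exact ⟨[], rfl, by simp [deltaStar]⟩
  | append_singleton u x IH =>
    obtain ⟨u', himg, hlen⟩ := IH
    have hda : ∀ (q : Q) (v : List A), deltaStar δ q (v ++ [x]) = δ (deltaStar δ q v) x := by
      intro q v; rw [deltaStar_append]; rfl
    have himage : ∀ v : List A,
        Finset.univ.image (fun q => deltaStar δ q (v ++ [x])) =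
          (Finset.univ.image fun q => deltaStar δ q v).image (fun t => δ t x) := by
      intro v
      rw [Finset.image_image]
      exact Finset.image_congr (fun q _ => hda q v)
    have hmono' : ∀ q : Q, h (deltaStar δ q u) ≤ h (deltaStar δ q (u ++ [x])) := by
      intro q; rw [hda]; exact hmono _ x
    by_cases hfix : ∀ q : Q, δ (deltaStar δ q u) x = deltaStar δ q u
    · refine ⟨u', ?_, ?_⟩
      · rw [himg, himage]
        have : ∀ t ∈ Finset.univ.image fun q => deltaStar δ q u, δ t x = id t := by
          intro t ht
          obtain ⟨q, _, hq⟩ := Finset.mem_image.mp ht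
          rw [← hq]; exact hfix q
        rw [Finset.image_congr this, Finset.image_id]
      · exact le_trans hlen (by
          gcongr with q
          exact hmono' q)
    · push_neg at hfix
      obtain ⟨q0, hq0⟩ := hfix
      refine ⟨u' ++ [x], ?_, ?_⟩
      · rw [himage, himage, himg]
      · have hstrict' : (∑ q : Q, h (deltaStar δ q u)) < ∑ q : Q, h (deltaStar δ q (u ++ [x])) := by
          refine Finset.sum_lt_sum (fun q _ => hmono' q) ⟨q0, Finset.mem_univ q0, ?_⟩
          rw [hda]
          exact hstrict _ x hq0
        rw [List.length_append]
        simp only [List.length_singleton]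
        omega

end Stmt19Aux

/-- In an `n`-state weakly acyclic automaton, every reachable subset of states (an image
of the whole state set under some word) is the image of the state set under a word of
length at most `n(n-1)/2`. -/
theorem stmt19 {Q A : Type*} [Fintype Q] [DecidableEq Q] [Fintype A] (δ : Q → A → Q)
    (n : ℕ) (hn : Fintype.card Q = n) (hwa : WeaklyAcyclic δ) (S : Finset Q)
    (h : ∃ w : List A, Finset.univ.image (fun q => deltaStar δ q w) = S) :
    ∃ w' : List A, w'.length ≤ n * (n - 1) / 2 ∧
      Finset.univ.image (fun q => deltaStar δ q w') = S := by
  classical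
  obtain ⟨w, hw⟩ := h
  haveI hpo : IsPartialOrder Q (Stmt19Aux.Reach δ) :=
    { refl := Stmt19Aux.reach_refl δ
      trans := fun _ _ _ h1 h2 => Stmt19Aux.reach_trans δ h1 h2
      antisymm := fun _ _ h1 h2 => Stmt19Aux.reach_antisymm δ hwa h1 h2 }
  obtain ⟨lle, hlin, hRle⟩ := extend_partialOrder (Stmt19Aux.Reach δ)
  haveI := hlin
  set B : Q → Finset Q := fun q => Finset.univ.filter (fun p => lle p q ∧ p ≠ q) with hB
  set hgt : Q → ℕ := fun q => (B q).card with hhgt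
  have hlt : ∀ q p : Q, lle q p → q ≠ p → hgt q < hgt p := by
    intro q p hle hne
    apply Finset.card_lt_card
    constructor
    · intro r hr
      simp only [hB, Finset.mem_filter, Finset.mem_univ, true_and] at hr ⊢
      obtain ⟨h1, h2⟩ := hr
      refine ⟨trans_of lle h1 hle, ?_⟩
      rintro rfl
      exact hne (antisymm_of lle hle h1)
    · intro hsub
      have hq : q ∈ B p := by
        simp only [hB, Finset.mem_filter, Finset.mem_univ, true_and]
        exact ⟨hle, hne⟩
      have := hsub hq
      simp only [hB, Finset.mem_filter, Finset.mem_univ, true_and] at this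
      exact this.2 rfl
  have hmono : ∀ (q : Q) (x : A), hgt q ≤ hgt (δ q x) := by
    intro q x
    by_cases heq : δ q x = q
    · rw [heq]
    · exact le_of_lt (hlt q (δ q x) (hRle _ _ ⟨[x], rfl⟩) (Ne.symm heq))
  have hstrict : ∀ (q : Q) (x : A), δ q x ≠ q → hgt q < hgt (δ q x) := by
    intro q x heq
    exact hlt q (δ q x) (hRle _ _ ⟨[x], rfl⟩) (Ne.symm heq)
  have hinj : Function.Injective hgt := by
    intro q p hqp
    by_contra hne
    rcases total_of lle q p with h1 | h1
    · exact absurd hqp (Nat.ne_of_lt (hlt q p h1 hne))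
    · exact absurd hqp.symm (Nat.ne_of_lt (hlt p q h1 (Ne.symm hne)))
  have hboundn : ∀ q : Q, hgt q < n := by
    intro q
    have h1 : B q ⊆ Finset.univ.erase q := by
      intro r hr
      simp only [hB, Finset.mem_filter, Finset.mem_univ, true_and] at hr
      exact Finset.mem_erase.mpr ⟨hr.2, Finset.mem_univ r⟩
    have h2 := Finset.card_le_card h1
    rw [Finset.card_erase_of_mem (Finset.mem_univ q), Finset.card_univ, hn] at h2
    have hpos : 0 < n := by
      rw [← hn]
      exact Fintype.card_pos_iff.mpr ⟨q⟩
    show (B q).card < n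
    omega
  have himgrange : Finset.univ.image hgt = Finset.range n := by
    apply Finset.eq_of_subset_of_card_le
    · intro i hi
      obtain ⟨q, _, rfl⟩ := Finset.mem_image.mp hi
      exact Finset.mem_range.mpr (hboundn q)
    · rw [Finset.card_range, Finset.card_image_of_injective _ hinj, Finset.card_univ, hn]
  have hsum : (∑ q : Q, hgt q) * 2 = n * (n - 1) := by
    have h1 := Finset.sum_range_id_mul_two n
    rw [← himgrange] at h1
    rwa [Finset.sum_image (fun a _ b _ hab => hinj hab)] at h1
  obtain ⟨w', himg', hlen'⟩ := Stmt19Aux.shorten δ hgt hmono hstrict w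
  refine ⟨w', ?_, by rw [himg', hw]⟩
  have hPhi : (∑ q : Q, hgt (deltaStar δ q w)) ≤ (∑ q : Q, hgt q) * 2 := by
    rw [hsum]
    calc (∑ q : Q, hgt (deltaStar δ q w)) ≤ ∑ _q : Q, (n - 1) :=
          Finset.sum_le_sum (fun q _ => by have := hboundn (deltaStar δ q w); omega)
      _ = n * (n - 1) := by rw [Finset.sum_const, Finset.card_univ, hn, smul_eq_mul]
  have hfin : w'.length ≤ ∑ q : Q, hgt q := by omega
  calc w'.length ≤ ∑ q : Q, hgt q := hfin
    _ = n * (n - 1) / 2 := by omega
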